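/- arXiv:2406.09094 — 2 statements merged into one kernel-verified Lean document; each statement's English description precedes it below -/
import Mathlib

section
/- The system of equations k00 = ρ²e^{-2μ}, k01 = 2ρe^{-μ}(1-ρe^{-μ}), k11 = (1-ρe^{-μ})², where ρ = (k00 + k01/2)/(k00 + k01), has as its unique solution with all entries positive: k00 = (1-√(1-e^{-μ}))², k01 = 2(1-√(1-e^{-μ}))√(1-e^{-μ}), k11 = 1-e^{-μ}. -/
open Real

/-- The equilibrium system for the one-gene recessive lethal Wright-Fisher model has a
unique positive solution. -/
theorem stmt_0 (μ : ℝ) (hμ : 0 < μ) (k00 k01 k11 : ℝ)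
    (h00 : 0 < k00) (h01 : 0 < k01) (h11 : 0 < k11) :
    (k00 = ((k00 + k01 / 2) / (k00 + k01))^2 * exp (-2*μ) ∧
     k01 = 2 * ((k00 + k01 / 2) / (k00 + k01)) * exp (-μ) *
            (1 - ((k00 + k01 / 2) / (k00 + k01)) * exp (-μ)) ∧
     k11 = (1 - ((k00 + k01 / 2) / (k00 + k01)) * exp (-μ))^2)
    ↔
    (k00 = (1 - Real.sqrt (1 - exp (-μ)))^2 ∧
     k01 = 2 * (1 - Real.sqrt (1 - exp (-μ))) * Real.sqrt (1 - exp (-μ)) ∧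
     k11 = 1 - exp (-μ)) := by
  have hE0 : 0 < exp (-μ) := exp_pos _
  have hE1 : exp (-μ) < 1 := exp_lt_one_iff.mpr (by linarith)
  have hexp2 : exp (-2*μ) = exp (-μ) * exp (-μ) := by
    rw [← exp_add]; ring_nf
  set s := Real.sqrt (1 - exp (-μ)) with hsdef
  have hs2 : s^2 = 1 - exp (-μ) := Real.sq_sqrt (by linarith)
  have hs0 : 0 ≤ s := Real.sqrt_nonneg _
  have hs1 : s < 1 := by nlinarith
  constructor
  · rintro ⟨e1, e2, e3⟩
    have hsum : (0:ℝ) < k00 + k01 := by linarith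
    set x := (k00 + k01 / 2) / (k00 + k01) * exp (-μ) with hx
    have hx00 : k00 = x^2 := by rw [e1, hexp2, hx]; ring
    have hx01 : k01 = 2*x*(1-x) := by rw [hx]; linear_combination e2
    have hx11 : k11 = (1-x)^2 := by rw [hx]; linear_combination e3
    have hxpos : 0 < x := by nlinarith
    have hxlt1 : x < 1 := by nlinarith
    have key : x * (k00 + k01) = (k00 + k01/2) * exp (-μ) := by
      rw [hx]; field_simp
    have key2 : x * (x*(2-x) - exp (-μ)) = 0 := by
      rw [hx00, hx01] at key; linear_combination key
    have hquad : x*(2-x) = exp (-μ) := by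
      rcases mul_eq_zero.mp key2 with h | h
      · linarith
      · linarith
    have hsx : s = 1 - x := by
      have h1 : (1-x)^2 = 1 - exp (-μ) := by linear_combination -hquad
      rw [hsdef, ← h1, Real.sqrt_sq (by linarith)]
    refine ⟨?_, ?_, ?_⟩
    · rw [hsx]; linear_combination hx00
    · rw [hsx]; linear_combination hx01
    · rw [← hs2, hsx]; linear_combination hx11
  · rintro ⟨e1, e2, e3⟩
    subst e1; subst e2; subst e3
    have hEeq : exp (-μ) = 1 - s^2 := by linarith
    have hdpos : (0:ℝ) < (1-s)^2 + 2*(1-s)*s := by nlinarith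
    have hρ' : ((1-s)^2 + 2*(1-s)*s/2)/((1-s)^2 + 2*(1-s)*s) * (1 - s^2) = 1 - s := by
      rw [div_mul_eq_mul_div, div_eq_iff hdpos.ne']; ring
    set r := ((1-s)^2 + 2*(1-s)*s/2)/((1-s)^2 + 2*(1-s)*s) with hr
    refine ⟨?_, ?_, ?_⟩
    · rw [hexp2, hEeq]; linear_combination (-(r*(1-s^2)) - (1-s)) * hρ'
    · rw [hEeq]; linear_combination (2*(r*(1-s^2) + 1 - s) - 2) * hρ'
    · rw [hEeq]; linear_combination (1 + s - r*(1-s^2)) * hρ'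
end

section
/- For any fit diploid individual x with diploid burden b(x) ≥ 1 and any recombination rate r ∈ (0,1], the probability g_r(x) of producing a mutation-free gamete satisfies g_r(x) ≥ ((1-r)^{N-1}/2)·1{min(b(z_i),b(z_j))=0} and g_1(x) = (1/2)^{b(x)} > 0 whenever the mutations on the two haplotypes occupy disjoint sets of loci. -/
open Finset

/-- Haploid burden of a haplotype over `N` loci. -/
def hb (N : ℕ) (z : ℕ → Bool) : ℕ := ∑ n ∈ Finset.range N, (z n).toNat

/-- Probability that the individual `(zi, zj)` produces a mutation-free gamete under
recombination rate `r`: sum over the set `γ` of potential crossover breakpoints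
(each of the `N-1` gaps independently with probability `r`) and over the set `τ`
of segments taken from the first haplotype (each segment chosen uniformly); the
gamete takes locus `n` from `zi` iff the segment index of `n` lies in `τ`. -/
noncomputable def gr (N : ℕ) (r : ℝ) (zi zj : ℕ → Bool) : ℝ :=
  ∑ γ ∈ (Finset.range (N - 1)).powerset, ∑ τ ∈ (Finset.range N).powerset,
    r ^ γ.card * (1 - r) ^ (N - 1 - γ.card) * (1 / 2 : ℝ) ^ N *
      (if ∀ n ∈ Finset.range N,
          (if (γ ∩ Finset.range n).card ∈ τ then zi n else zj n) = false
        then 1 else 0)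



lemma hb_eq_card (N : ℕ) (z : ℕ → Bool) :
    hb N z = ((Finset.range N).filter (fun n => z n = true)).card := by
  rw [hb, Finset.card_filter]
  refine Finset.sum_congr rfl fun n _ => ?_
  cases z n <;> simp

lemma half_pow (N b : ℕ) (h : b ≤ N) : (1/2:ℝ)^N * ((2:ℝ)^(N-b)) = (1/2)^b := by
  obtain ⟨k, rfl⟩ := Nat.exists_eq_add_of_le h
  rw [Nat.add_sub_cancel_left, pow_add, mul_assoc, ← mul_pow]
  norm_num

lemma gr_one (N : ℕ) (hN : 1 ≤ N) (zi zj : ℕ → Bool)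
    (hfit : ∀ n < N, ¬(zi n = true ∧ zj n = true)) :
    gr N 1 zi zj = (1 / 2 : ℝ) ^ (hb N zi + hb N zj) := by
  set R := (Finset.range N).filter (fun n => zj n = true) with hR
  set T := (Finset.range N).filter (fun n => zi n = false) with hT
  have hRT : R ⊆ T := by
    intro n hn
    simp only [hR, hT, Finset.mem_filter, Finset.mem_range] at hn ⊢
    refine ⟨hn.1, ?_⟩
    have := hfit n hn.1
    cases h : zi n
    · rfl
    · exact absurd ⟨h, hn.2⟩ this
  have hTcard : T.card = N - hb N zi := by
    have := Finset.card_filter_add_card_filter_not (s := Finset.range N)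
      (p := fun n => zi n = true)
    have h2 : (Finset.range N).filter (fun n => ¬ zi n = true) = T := by
      simp [hT, Bool.not_eq_true]
    rw [h2] at this
    rw [← hb_eq_card] at this
    have hN' : (Finset.range N).card = N := Finset.card_range N
    omega
  have hRcard : R.card = hb N zj := (hb_eq_card N zj).symm
  have hble : hb N zi + hb N zj ≤ N := by
    have := Finset.card_le_card hRT
    have h3 : hb N zi ≤ N := by
      rw [hb_eq_card]
      exact (Finset.card_filter_le _ _).trans (by simp)
    omega
  rw [gr, Finset.sum_eq_single (Finset.range (N-1))]
  · have hcc : (Finset.range (N-1)).card = N - 1 := Finset.card_range _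
    have hcond : ∀ τ ∈ (Finset.range N).powerset,
        (if ∀ n ∈ Finset.range N,
            (if (Finset.range (N-1) ∩ Finset.range n).card ∈ τ then zi n else zj n) = false
          then (1:ℝ) else 0) =
        (if R ⊆ τ ∧ τ ⊆ T then (1:ℝ) else 0) := by
      intro τ hτ
      rw [Finset.mem_powerset] at hτ
      have hcard : ∀ n < N, (Finset.range (N-1) ∩ Finset.range n).card = n := fun n hn => by
        rw [Finset.inter_eq_right.mpr (Finset.range_subset_range.mpr (by omega)), Finset.card_range]
      congr 1
      simp only [eq_iff_iff]
      constructor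
      · intro h
        constructor
        · intro n hn
          simp only [hR, Finset.mem_filter, Finset.mem_range] at hn
          have := h n (Finset.mem_range.mpr hn.1)
          rw [hcard n hn.1] at this
          by_contra hnτ
          rw [if_neg hnτ, hn.2] at this
          simp at this
        · intro n hn
          have hnN : n < N := Finset.mem_range.mp (hτ hn)
          have := h n (Finset.mem_range.mpr hnN)
          rw [hcard n hnN, if_pos hn] at this
          simp [hT, hnN, this]
      · rintro ⟨h1, h2⟩ n hn
        have hnN : n < N := Finset.mem_range.mp hn
        rw [hcard n hnN]
        by_cases hnτ : n ∈ τ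
        · rw [if_pos hnτ]
          have := h2 hnτ
          simp only [hT, Finset.mem_filter] at this
          exact this.2
        · rw [if_neg hnτ]
          cases hz : zj n
          · rfl
          · exact absurd (h1 (by simp [hR, hnN, hz])) hnτ
    rw [Finset.sum_congr rfl fun τ hτ => by rw [hcond τ hτ]]
    simp only [hcc, one_pow, Nat.sub_self, pow_zero, one_mul, mul_one]
    rw [← Finset.mul_sum, Finset.sum_boole]
    have hfil : (Finset.range N).powerset.filter (fun τ => R ⊆ τ ∧ τ ⊆ T) =
        Finset.Icc R T := by
      ext τ
      simp only [Finset.mem_filter, Finset.mem_powerset, Finset.mem_Icc]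
      constructor
      · rintro ⟨_, h1, h2⟩; exact ⟨h1, h2⟩
      · rintro ⟨h1, h2⟩
        exact ⟨h2.trans (Finset.filter_subset _ _), h1, h2⟩
    rw [hfil, Finset.card_Icc_finset hRT, hTcard, hRcard]
    have hexp : N - hb N zi - hb N zj = N - (hb N zi + hb N zj) := by omega
    rw [hexp]
    push_cast
    exact half_pow N _ hble
  · intro γ hγ hne
    have hsub : γ ⊂ Finset.range (N-1) :=
      lt_of_le_of_ne (Finset.mem_powerset.mp hγ) hne
    have hlt : γ.card < N - 1 := by
      have := Finset.card_lt_card hsub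
      simpa using this
    simp [zero_pow (show N - 1 - γ.card ≠ 0 by omega)]
  · intro h
    exact absurd (Finset.mem_powerset.mpr subset_rfl) h


lemma hb_zero (N : ℕ) (z : ℕ → Bool) (h : hb N z = 0) : ∀ n < N, z n = false := by
  intro n hn
  rw [hb, Finset.sum_eq_zero_iff] at h
  have := h n (Finset.mem_range.mpr hn)
  cases hz : z n <;> simp [hz] at this ⊢

lemma gr_nonneg (N : ℕ) (zi zj : ℕ → Bool) (r : ℝ) (hr0 : 0 ≤ r) (hr1 : r ≤ 1) :
    0 ≤ gr N r zi zj := by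
  refine Finset.sum_nonneg fun γ _ => Finset.sum_nonneg fun τ _ => ?_
  have h1r : (0:ℝ) ≤ 1 - r := by linarith
  positivity

lemma gr_ge (N : ℕ) (hN : 1 ≤ N) (zi zj : ℕ → Bool) (r : ℝ) (hr0 : 0 ≤ r) (hr1 : r ≤ 1)
    (hmin : hb N zi = 0 ∨ hb N zj = 0) :
    (1 - r) ^ (N - 1) / 2 ≤ gr N r zi zj := by
  have h1r : (0:ℝ) ≤ 1 - r := by linarith
  set c : ℝ := (1 - r) ^ (N - 1) * (1 / 2 : ℝ) ^ N with hc
  have hc0 : 0 ≤ c := by positivity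
  -- gr is at least the inner sum at γ = ∅
  have hstep : (∑ τ ∈ (Finset.range N).powerset,
      r ^ (∅ : Finset ℕ).card * (1 - r) ^ (N - 1 - (∅ : Finset ℕ).card) * (1 / 2 : ℝ) ^ N *
        (if ∀ n ∈ Finset.range N,
            (if ((∅ : Finset ℕ) ∩ Finset.range n).card ∈ τ then zi n else zj n) = false
          then 1 else 0)) ≤ gr N r zi zj := by
    refine Finset.single_le_sum (f := fun γ => ∑ τ ∈ (Finset.range N).powerset,
      r ^ γ.card * (1 - r) ^ (N - 1 - γ.card) * (1 / 2 : ℝ) ^ N *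
        (if ∀ n ∈ Finset.range N,
            (if (γ ∩ Finset.range n).card ∈ τ then zi n else zj n) = false
          then 1 else 0)) (fun γ _ => Finset.sum_nonneg fun τ _ => by positivity) ?_
    exact Finset.empty_mem_powerset _
  refine le_trans ?_ hstep
  simp only [Finset.card_empty, pow_zero, one_mul, Nat.sub_zero, Finset.empty_inter]
  -- choose the membership test according to which haplotype is clean
  obtain hz | hz := hmin
  · -- zi is clean: take 0 ∈ τ
    have hz' := hb_zero N zi hz
    have hpt : ∀ τ ∈ (Finset.range N).powerset,
        c * (if (0:ℕ) ∈ τ then (1:ℝ) else 0) ≤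
        (1 - r) ^ (N - 1) * (1 / 2 : ℝ) ^ N *
          (if ∀ n ∈ Finset.range N,
              (if ((∅:Finset ℕ)).card ∈ τ then zi n else zj n) = false then (1:ℝ) else 0) := by
      intro τ _
      rw [← hc]
      by_cases h0 : (0:ℕ) ∈ τ
      · rw [if_pos h0]
        have : (if ∀ n ∈ Finset.range N,
            (if ((∅:Finset ℕ)).card ∈ τ then zi n else zj n) = false then (1:ℝ) else 0) = 1 := by
          rw [if_pos]
          intro n hn
          rw [if_pos (show (∅:Finset ℕ).card ∈ τ by simpa using h0)]
          exact hz' n (Finset.mem_range.mp hn)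
        rw [this]
      · rw [if_neg h0]
        rw [mul_zero]
        positivity
    refine le_trans ?_ (Finset.sum_le_sum hpt)
    rw [← Finset.mul_sum, Finset.sum_boole]
    have hfil : (Finset.range N).powerset.filter (fun τ => (0:ℕ) ∈ τ) =
        Finset.Icc {0} (Finset.range N) := by
      ext τ
      simp only [Finset.mem_filter, Finset.mem_powerset, Finset.mem_Icc]
      constructor
      · rintro ⟨h1, h2⟩; exact ⟨Finset.singleton_subset_iff.mpr h2, h1⟩
      · rintro ⟨h1, h2⟩; exact ⟨h2, h1 (Finset.mem_singleton_self 0)⟩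
    rw [hfil, Finset.card_Icc_finset (Finset.singleton_subset_iff.mpr
      (Finset.mem_range.mpr hN)), Finset.card_range, Finset.card_singleton]
    rw [hc]
    push_cast
    rw [mul_assoc, half_pow N 1 hN, pow_one]
    all_goals exact le_of_eq (by ring)
  · -- zj is clean: take 0 ∉ τ
    have hz' := hb_zero N zj hz
    have hpt : ∀ τ ∈ (Finset.range N).powerset,
        c * (if (0:ℕ) ∉ τ then (1:ℝ) else 0) ≤
        (1 - r) ^ (N - 1) * (1 / 2 : ℝ) ^ N *
          (if ∀ n ∈ Finset.range N,
              (if ((∅:Finset ℕ)).card ∈ τ then zi n else zj n) = false then (1:ℝ) else 0) := by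
      intro τ _
      rw [← hc]
      by_cases h0 : (0:ℕ) ∈ τ
      · rw [if_neg (by simpa using h0)]
        rw [mul_zero]
        positivity
      · rw [if_pos h0]
        have : (if ∀ n ∈ Finset.range N,
            (if ((∅:Finset ℕ)).card ∈ τ then zi n else zj n) = false then (1:ℝ) else 0) = 1 := by
          rw [if_pos]
          intro n hn
          rw [if_neg (show (∅:Finset ℕ).card ∉ τ by simpa using h0)]
          exact hz' n (Finset.mem_range.mp hn)
        rw [this]
    refine le_trans ?_ (Finset.sum_le_sum hpt)
    rw [← Finset.mul_sum, Finset.sum_boole]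
    have hfil : (Finset.range N).powerset.filter (fun τ => (0:ℕ) ∉ τ) =
        ((Finset.range N).erase 0).powerset := by
      ext τ
      simp only [Finset.mem_filter, Finset.mem_powerset, Finset.subset_erase]
    rw [hfil, Finset.card_powerset, Finset.card_erase_of_mem
      (Finset.mem_range.mpr hN), Finset.card_range]
    rw [hc]
    push_cast
    rw [mul_assoc, half_pow N 1 hN, pow_one]
    all_goals exact le_of_eq (by ring)


/-- For a fit individual with positive diploid burden:
(a) for any r ∈ (0,1], g_r(x) ≥ ((1-r)^{N-1}/2)·1{min(b(zi),b(zj)) = 0};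
(b) since the mutations on the two haplotypes occupy disjoint sets of loci (fitness),
g_1(x) = (1/2)^{b(x)} > 0. -/
theorem stmt_10 (N : ℕ) (hN : 1 ≤ N) (zi zj : ℕ → Bool)
    (hfit : ∀ n < N, ¬(zi n = true ∧ zj n = true))
    (hb1 : 1 ≤ hb N zi + hb N zj)
    (r : ℝ) (hr0 : 0 < r) (hr1 : r ≤ 1) :
    gr N r zi zj ≥ (1 - r) ^ (N - 1) / 2 *
        (if min (hb N zi) (hb N zj) = 0 then 1 else 0) ∧
    gr N 1 zi zj = (1 / 2 : ℝ) ^ (hb N zi + hb N zj) ∧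
    0 < gr N 1 zi zj := by
  have hge : gr N r zi zj ≥ (1 - r) ^ (N - 1) / 2 *
      (if min (hb N zi) (hb N zj) = 0 then 1 else 0) := by
    by_cases hmin : min (hb N zi) (hb N zj) = 0
    · rw [if_pos hmin, mul_one]
      exact gr_ge N hN zi zj r hr0.le hr1 (Nat.min_eq_zero_iff.mp hmin)
    · rw [if_neg hmin, mul_zero]
      exact gr_nonneg N zi zj r hr0.le hr1
  have heq := gr_one N hN zi zj hfit
  refine ⟨hge, heq, ?_⟩
  rw [heq]
  positivity
end
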